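/- Let F be a field of characteristic 2, and let p, q ∈ F[z₁,…,zₙ] with q ≠ 0. Suppose pq is a multilinear polynomial (degree at most 1 in each variable) and the 1×1 matrix [p/q] over F(z) admits a symmetric Bessmertnyĭ realization, i.e., p/q is the Schur complement A11 - A12 A22⁻¹ A21 of a symmetric affine linear pencil A(z) = A₀ + z₁A₁ + ⋯ + zₙAₙ with symmetric A_i over F. Then pq is linear (total degree at most 1). -/

import Mathlib

open MvPolynomial Matrix

/-- A scalar rational function `f ∈ F(z)` has a symmetric Bessmertnyĭ realization if
it is the Schur complement of a symmetric affine linear matrix pencil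
`A(z) = A₀ + z₁A₁ + ⋯ + zₙAₙ` with symmetric coefficient matrices over `F`,
partitioned with a `1×1` upper-left block and invertible `(2,2)`-block. -/
def HasSymBR {F : Type*} [Field F] {n : ℕ}
    (f : FractionRing (MvPolynomial (Fin n) F)) : Prop :=
  ∃ (s : ℕ) (A₀ : Matrix (Fin 1 ⊕ Fin s) (Fin 1 ⊕ Fin s) F)
      (A : Fin n → Matrix (Fin 1 ⊕ Fin s) (Fin 1 ⊕ Fin s) F),
    A₀ᵀ = A₀ ∧ (∀ i, (A i)ᵀ = A i) ∧
    (let P : Matrix (Fin 1 ⊕ Fin s) (Fin 1 ⊕ Fin s)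
        (FractionRing (MvPolynomial (Fin n) F)) :=
      A₀.map (fun x => algebraMap (MvPolynomial (Fin n) F) _ (C x)) +
        ∑ i, algebraMap (MvPolynomial (Fin n) F) (FractionRing (MvPolynomial (Fin n) F)) (X i) •
          (A i).map (fun x => algebraMap (MvPolynomial (Fin n) F) _ (C x))
     IsUnit P.toBlocks₂₂ ∧
       P.toBlocks₁₁ - P.toBlocks₁₂ * P.toBlocks₂₂⁻¹ * P.toBlocks₂₁
         = Matrix.of fun _ _ => f)

section AuxLemmas

/-- In characteristic two, the quadratic form of a symmetric matrix collapses to its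
diagonal part. -/
lemma quad_diag_char_two {K : Type*} [CommRing K] (h2 : ∀ x : K, x + x = 0)
    {m : Type*} [Fintype m] [DecidableEq m] (M : Matrix m m K)
    (hM : ∀ a b, M a b = M b a) (w : m → K) :
    ∑ j, ∑ k, w j * M j k * w k = ∑ j, M j j * (w j * w j) := by
  rw [← Finset.sum_product']
  rw [show (Finset.univ ×ˢ Finset.univ : Finset (m × m))
      = Finset.univ.diag ∪ Finset.univ.offDiag from (Finset.diag_union_offDiag _).symm]
  rw [Finset.sum_union (Finset.disjoint_diag_offDiag _), Finset.sum_diag]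
  have hoff : ∑ p ∈ Finset.univ.offDiag,
      w p.1 * M p.1 p.2 * w p.2 = 0 := by
    refine Finset.sum_involution (fun p _ => p.swap) (fun p hp => ?_) (fun p hp _ hps => ?_)
      (fun p hp => ?_) (fun p hp => ?_)
    · simp only [Prod.fst_swap, Prod.snd_swap]
      rw [hM p.2 p.1,
        show w p.2 * M p.1 p.2 * w p.1 = w p.1 * M p.1 p.2 * w p.2 from by ring]
      exact h2 _
    · have hne : p.1 ≠ p.2 := (Finset.mem_offDiag.mp hp).2.2
      have hps' : p.swap = p := hps
      exact (hne (congrArg Prod.snd hps')).elim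
    · rcases Finset.mem_offDiag.mp hp with ⟨_, _, hne⟩
      exact Finset.mem_offDiag.mpr ⟨Finset.mem_univ _, Finset.mem_univ _, fun hh => hne hh.symm⟩
    · exact Prod.swap_swap p
  rw [hoff, add_zero]
  exact Finset.sum_congr rfl fun j _ => by ring

/-- Coefficient of a partial derivative of a multivariate polynomial. -/
lemma coeff_pderiv_aux {R : Type*} [CommRing R] {σ : Type*} [DecidableEq σ] (i : σ)
    (m : σ →₀ ℕ) (f : MvPolynomial σ R) :
    coeff m (pderiv i f) = ((m i + 1 : ℕ) : R) * coeff (m + Finsupp.single i 1) f := by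
  induction f using MvPolynomial.induction_on' with
  | monomial u a =>
    rw [pderiv_monomial, coeff_monomial, coeff_monomial]
    split_ifs with h h' h'
    · subst h'
      have h3 : (m + Finsupp.single i 1 : σ →₀ ℕ) i = m i + 1 := by
        rw [Finsupp.add_apply, Finsupp.single_eq_same]
      rw [h3]
      push_cast
      ring
    · -- u - single i 1 = m but u ≠ m + single i 1 : then u i = 0
      have hui : u i = 0 := by
        by_contra hne
        apply h'
        ext k
        have hk : (u - Finsupp.single i 1 : σ →₀ ℕ) k = m k := by rw [h]
        simp only [Finsupp.coe_tsub, Pi.sub_apply, Finsupp.single_apply,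
          Finsupp.coe_add, Pi.add_apply] at hk ⊢
        by_cases hik : i = k
        · subst hik; simp at hk ⊢; omega
        · simp [hik] at hk ⊢; omega
      simp [hui]
    · exfalso
      apply h
      subst h'
      ext k
      simp only [Finsupp.coe_tsub, Pi.sub_apply, Finsupp.coe_add, Pi.add_apply,
        Finsupp.single_apply]
      by_cases hik : i = k
      · subst hik; simp
      · simp [hik]
    · simp
  | add f g hf hg =>
    simp [map_add, coeff_add, hf, hg, mul_add]

/-- If `g·b² = Σ dⱼ·aⱼ²` with each `dⱼ` affine linear, in characteristic two all second
partial derivatives of `g` vanish. -/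
lemma second_pderiv_zero {F : Type*} [Field F] [CharP F 2] {n : ℕ}
    {ι : Type*} [Fintype ι] (g b : MvPolynomial (Fin n) F) (hb : b ≠ 0)
    (d a : ι → MvPolynomial (Fin n) F)
    (hd : ∀ (i : Fin n) (j : ι), ∃ c : F, pderiv i (d j) = C c)
    (hgb : g * b ^ 2 = ∑ j, d j * a j ^ 2) (i i' : Fin n) :
    pderiv i' (pderiv i g) = 0 := by
  have h2 : ((2 : ℕ) : MvPolynomial (Fin n) F) = 0 := CharP.cast_eq_zero _ 2
  have hsq : ∀ (k : Fin n) (x : MvPolynomial (Fin n) F), pderiv k (x ^ 2) = 0 := by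
    intro k x
    rw [pderiv_pow, h2, zero_mul, zero_mul]
  have key : pderiv i g * b ^ 2 = ∑ j, pderiv i (d j) * a j ^ 2 := by
    have h := congrArg (⇑(pderiv i)) hgb
    rw [map_sum] at h
    simp only [pderiv_mul, hsq, mul_zero, add_zero] at h
    exact h
  have key2 := congrArg (⇑(pderiv i')) key
  rw [map_sum, pderiv_mul, hsq, mul_zero, add_zero] at key2
  have hz : ∀ j, pderiv i' (pderiv i (d j) * a j ^ 2) = 0 := by
    intro j
    obtain ⟨c, hc⟩ := hd i j
    rw [hc, pderiv_mul, pderiv_C, zero_mul, hsq, mul_zero, add_zero]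
  rw [Finset.sum_congr rfl fun j _ => hz j, Finset.sum_const, smul_zero] at key2
  rcases mul_eq_zero.mp key2 with h | h
  · exact h
  · exact absurd h (pow_ne_zero 2 hb)

/-- A multilinear polynomial whose second partial derivatives all vanish is linear. -/
lemma totalDegree_le_one_of_pderiv {F : Type*} [Field F] {n : ℕ}
    (g : MvPolynomial (Fin n) F) (hml : ∀ i, g.degreeOf i ≤ 1)
    (hdd : ∀ i i', pderiv i' (pderiv i g) = 0) : g.totalDegree ≤ 1 := by
  rw [MvPolynomial.totalDegree]
  apply Finset.sup_le
  intro m hm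
  by_contra hgt
  push_neg at hgt
  have hmi : ∀ i, m i ≤ 1 := by
    intro i
    calc m i ≤ g.degreeOf i := by
          rw [MvPolynomial.degreeOf_eq_sup]; exact Finset.le_sup (f := fun m => m i) hm
      _ ≤ 1 := hml i
  have hcard : 2 ≤ m.support.card := by
    by_contra hc
    push_neg at hc
    have : (m.sum fun _ e => e) ≤ m.support.card := by
      rw [Finsupp.sum]
      calc ∑ i ∈ m.support, m i ≤ ∑ _i ∈ m.support, 1 :=
            Finset.sum_le_sum fun i _ => hmi i
        _ = m.support.card := by simp
    omega
  obtain ⟨i, hi, j, hj, hij⟩ := Finset.one_lt_card.mp (by omega : 1 < m.support.card)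
  have hmi1 : m i = 1 :=
    le_antisymm (hmi i) (Nat.one_le_iff_ne_zero.mpr (Finsupp.mem_support_iff.mp hi))
  have hmj1 : m j = 1 :=
    le_antisymm (hmi j) (Nat.one_le_iff_ne_zero.mpr (Finsupp.mem_support_iff.mp hj))
  set μ : Fin n →₀ ℕ := m - Finsupp.single i 1 - Finsupp.single j 1 with hμ
  have happ : ∀ k : Fin n, μ k = m k - (if i = k then 1 else 0) - (if j = k then 1 else 0) := by
    intro k
    simp [hμ, Finsupp.single_apply]
  have hμi : μ i = 0 := by
    rw [happ i, if_pos rfl, if_neg (Ne.symm hij)]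
    omega
  have hμj : μ j = 0 := by
    rw [happ j, if_neg hij, if_pos rfl]
    omega
  have hμsi : (μ + Finsupp.single j 1 : Fin n →₀ ℕ) i = 0 := by
    rw [Finsupp.add_apply, Finsupp.single_apply, if_neg (fun hh => hij hh.symm), hμi]
    · rfl
  have hμm : (μ + Finsupp.single j 1 + Finsupp.single i 1 : Fin n →₀ ℕ) = m := by
    ext k
    rw [Finsupp.add_apply, Finsupp.add_apply, happ k, Finsupp.single_apply,
      Finsupp.single_apply]
    by_cases hik : i = k
    · subst hik
      rw [if_pos rfl, if_neg (fun hh => hij hh.symm)]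
      omega
    · by_cases hjk : j = k
      · subst hjk
        rw [if_neg hik, if_pos rfl]
        omega
      · rw [if_neg hik, if_neg hjk]
        omega
  have h0 := congrArg (coeff μ) (hdd i j)
  rw [coeff_pderiv_aux, coeff_pderiv_aux, hμm, hμj, hμsi] at h0
  simp only [zero_add, Nat.cast_one, one_mul, coeff_zero] at h0
  exact MvPolynomial.mem_support_iff.mp hm h0

lemma tb11 {α l m : Type*} (M : Matrix (l ⊕ m) (l ⊕ m) α) (i : l) (j : l) :
    M.toBlocks₁₁ i j = M (Sum.inl i) (Sum.inl j) := rfl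

lemma tb12 {α l m : Type*} (M : Matrix (l ⊕ m) (l ⊕ m) α) (i : l) (j : m) :
    M.toBlocks₁₂ i j = M (Sum.inl i) (Sum.inr j) := rfl

lemma tb21 {α l m : Type*} (M : Matrix (l ⊕ m) (l ⊕ m) α) (i : m) (j : l) :
    M.toBlocks₂₁ i j = M (Sum.inr i) (Sum.inl j) := rfl

lemma tb22 {α l m : Type*} (M : Matrix (l ⊕ m) (l ⊕ m) α) (i : m) (j : m) :
    M.toBlocks₂₂ i j = M (Sum.inr i) (Sum.inr j) := rfl

end AuxLemmas

set_option maxHeartbeats 2000000 in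
set_option synthInstance.maxHeartbeats 1000000 in
/-- over a field of characteristic 2, if `q ≠ 0`, `pq` is multilinear,
and `p/q ∈ F(z)` has a symmetric Bessmertnyĭ realization, then `pq` is linear. -/
theorem stmt14 (F : Type*) [Field F] [CharP F 2] (n : ℕ)
    (p q : MvPolynomial (Fin n) F) (hq : q ≠ 0)
    (hml : ∀ i, (p * q).degreeOf i ≤ 1)
    (h : HasSymBR
      (algebraMap (MvPolynomial (Fin n) F) (FractionRing (MvPolynomial (Fin n) F)) p /
        algebraMap (MvPolynomial (Fin n) F) (FractionRing (MvPolynomial (Fin n) F)) q)) :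
    (p * q).totalDegree ≤ 1 := by
  classical
  obtain ⟨s, A₀, A, hA₀, hA, hmain⟩ := h
  obtain ⟨hU, hSchur⟩ := hmain
  set φ := algebraMap (MvPolynomial (Fin n) F) (FractionRing (MvPolynomial (Fin n) F)) with hφ
  set P : Matrix (Fin 1 ⊕ Fin s) (Fin 1 ⊕ Fin s) (FractionRing (MvPolynomial (Fin n) F)) :=
    A₀.map (fun x => φ (C x)) + ∑ i, φ (X i) • (A i).map (fun x => φ (C x)) with hP
  haveI hKchar : CharP (FractionRing (MvPolynomial (Fin n) F)) 2 :=
    charP_of_injective_ringHom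
      (IsFractionRing.injective (MvPolynomial (Fin n) F) (FractionRing (MvPolynomial (Fin n) F))) 2
  have hφinj : Function.Injective φ :=
    IsFractionRing.injective (MvPolynomial (Fin n) F) (FractionRing (MvPolynomial (Fin n) F))
  have h2K : ∀ x : FractionRing (MvPolynomial (Fin n) F), x + x = 0 := fun x => by
    have h20 : (2 : FractionRing (MvPolynomial (Fin n) F)) = 0 := by
      exact_mod_cast CharP.cast_eq_zero (FractionRing (MvPolynomial (Fin n) F)) 2
    calc x + x = 2 * x := by ring
      _ = 0 := by rw [h20, zero_mul]
  -- the affine-linear diagonal entries as polynomials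
  set dp : (Fin 1 ⊕ Fin s) → MvPolynomial (Fin n) F :=
    fun a => C (A₀ a a) + ∑ i, X i * C (A i a a) with hdp
  -- entry formula for the pencil
  have hPe : ∀ a b, P a b = φ (C (A₀ a b) + ∑ i, X i * C (A i a b)) := by
    intro a b
    have hrhs : φ (C (A₀ a b) + ∑ i, X i * C (A i a b))
        = φ (C (A₀ a b)) + ∑ i, φ (X i) * φ (C (A i a b)) := by
      rw [_root_.map_add, _root_.map_sum]
      simp_rw [_root_.map_mul]
    rw [hrhs, hP]
    simp only [Matrix.add_apply, Matrix.sum_apply, Matrix.smul_apply, Matrix.map_apply,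
      smul_eq_mul]
  -- symmetry of the pencil
  have hA₀' : ∀ a b, A₀ a b = A₀ b a := fun a b => by
    simpa using congrFun (congrFun hA₀ b) a
  have hA' : ∀ i a b, A i a b = A i b a := fun i a b => by
    simpa using congrFun (congrFun (hA i) b) a
  have hPsym : ∀ a b, P a b = P b a := by
    intro a b
    rw [hPe a b, hPe b a, hA₀' a b]
    congr 2
    exact Finset.sum_congr rfl fun i _ => by rw [hA' i a b]
  have hdetU : IsUnit P.toBlocks₂₂.det := (Matrix.isUnit_iff_isUnit_det _).mp hU
  -- the vector of the quadratic form
  set u : Fin s → FractionRing (MvPolynomial (Fin n) F) :=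
    fun j => (P.toBlocks₂₂⁻¹ * P.toBlocks₂₁) j 0 with hu
  have hUB : ∀ k, (P.toBlocks₂₂⁻¹ * P.toBlocks₂₁) k 0 = u k := fun k => rfl
  set w : (Fin 1 ⊕ Fin s) → FractionRing (MvPolynomial (Fin n) F) :=
    Sum.elim (fun _ => (1 : FractionRing (MvPolynomial (Fin n) F))) u with hw
  -- evaluate the Schur identity at (0,0)
  have hS00 : P (Sum.inl 0) (Sum.inl 0) - ∑ k, P (Sum.inl 0) (Sum.inr k) * u k
      = φ p / φ q := by
    have h1 := congrFun (congrFun hSchur 0) 0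
    rw [Matrix.sub_apply, Matrix.mul_assoc, Matrix.mul_apply] at h1
    simp only [tb11, tb12, hUB, Matrix.of_apply] at h1
    exact h1
  have hT21 : ∑ jj, u jj * P (Sum.inr jj) (Sum.inl 0)
      = ∑ k, P (Sum.inl 0) (Sum.inr k) * u k :=
    Finset.sum_congr rfl fun k _ => by rw [hPsym (Sum.inr k) (Sum.inl 0)]; ring
  have hT22 : ∑ jj, ∑ k, u jj * P (Sum.inr jj) (Sum.inr k) * u k
      = ∑ jj, u jj * P (Sum.inr jj) (Sum.inl 0) := by
    refine Finset.sum_congr rfl fun jj _ => ?_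
    have hc := congrFun (congrFun
      (Matrix.mul_nonsing_inv_cancel_left P.toBlocks₂₂ P.toBlocks₂₁ hdetU) jj) 0
    rw [Matrix.mul_apply] at hc
    simp only [tb22, tb21, hUB] at hc
    rw [show ∑ k, u jj * P (Sum.inr jj) (Sum.inr k) * u k
        = u jj * ∑ k, P (Sum.inr jj) (Sum.inr k) * u k from by
      rw [Finset.mul_sum]; exact Finset.sum_congr rfl fun k _ => by ring, hc]
  -- the quadratic form identity
  have hquad : ∑ j, ∑ k, w j * P j k * w k = φ p / φ q := by
    rw [Fintype.sum_sum_type]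
    have e1 : ∑ a : Fin 1, ∑ k, w (Sum.inl a) * P (Sum.inl a) k * w k
        = P (Sum.inl 0) (Sum.inl 0) + ∑ k, P (Sum.inl 0) (Sum.inr k) * u k := by
      rw [Fin.sum_univ_one, Fintype.sum_sum_type, Fin.sum_univ_one]
      simp only [hw, Sum.elim_inl, Sum.elim_inr, one_mul, mul_one]
    have e2 : ∑ a : Fin s, ∑ k, w (Sum.inr a) * P (Sum.inr a) k * w k
        = (∑ k, P (Sum.inl 0) (Sum.inr k) * u k)
          + ∑ k, P (Sum.inl 0) (Sum.inr k) * u k := by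
      have estep : ∀ a : Fin s, ∑ k, w (Sum.inr a) * P (Sum.inr a) k * w k
          = u a * P (Sum.inr a) (Sum.inl 0)
            + ∑ k, u a * P (Sum.inr a) (Sum.inr k) * u k := by
        intro a
        rw [Fintype.sum_sum_type, Fin.sum_univ_one]
        simp only [hw, Sum.elim_inl, Sum.elim_inr, mul_one]
      rw [Finset.sum_congr rfl fun a _ => estep a, Finset.sum_add_distrib, hT22, hT21]
    rw [e1, e2, ← hS00]
    set T := ∑ k, P (Sum.inl 0) (Sum.inr k) * u k with hT
    rw [h2K T, add_zero, sub_eq_add_neg,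
      show -T = T from by rw [neg_eq_iff_add_eq_zero]; exact h2K T]
  -- diagonalize the quadratic form
  have hdiag : φ p / φ q = ∑ j, P j j * (w j * w j) := by
    rw [← hquad]
    exact quad_diag_char_two h2K P hPsym w
  have hq' : φ q ≠ 0 := fun hh => hq (hφinj (by rw [hh, map_zero]))
  have hdpj : ∀ j, φ (dp j) = P j j := fun j => by
    rw [hPe j j]
  have hsum2 : φ (p * q) = ∑ j, φ (dp j) * ((w j * φ q) * (w j * φ q)) := by
    have hfp : φ p = (φ p / φ q) * φ q := (div_mul_cancel₀ _ hq').symm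
    calc φ (p * q) = φ p * φ q := _root_.map_mul φ p q
      _ = ((φ p / φ q) * φ q) * φ q := by rw [← hfp]
      _ = (∑ j, P j j * (w j * w j)) * φ q * φ q := by rw [hdiag]
      _ = ∑ j, φ (dp j) * ((w j * φ q) * (w j * φ q)) := by
          rw [Finset.sum_mul, Finset.sum_mul]
          refine Finset.sum_congr rfl fun j _ => ?_
          rw [hdpj j]
          ring
  -- clear denominators
  obtain ⟨b, hbint⟩ := IsLocalization.exist_integer_multiples_of_finite
    (nonZeroDivisors (MvPolynomial (Fin n) F)) (fun j : Fin 1 ⊕ Fin s => w j * φ q)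
  simp only [IsLocalization.IsInteger, RingHom.mem_range] at hbint
  choose a ha using hbint
  have hb0 : (b : MvPolynomial (Fin n) F) ≠ 0 := nonZeroDivisors.coe_ne_zero b
  have ha' : ∀ j, φ (a j) = φ (b : MvPolynomial (Fin n) F) * (w j * φ q) := by
    intro j
    rw [ha j, Algebra.smul_def, ← hφ]
  have hfinal : (p * q) * (b : MvPolynomial (Fin n) F) ^ 2 = ∑ j, dp j * a j ^ 2 := by
    apply hφinj
    rw [_root_.map_mul, _root_.map_pow, _root_.map_sum, hsum2, Finset.sum_mul]
    refine Finset.sum_congr rfl fun j _ => ?_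
    rw [_root_.map_mul, _root_.map_pow, ha' j]
    ring
  -- the affine pieces have constant derivatives
  have hdcond : ∀ (i : Fin n) (j : Fin 1 ⊕ Fin s), ∃ c : F, pderiv i (dp j) = C c := by
    intro i j
    refine ⟨A i j j, ?_⟩
    simp only [hdp]
    rw [_root_.map_add, pderiv_C, zero_add, _root_.map_sum, Finset.sum_eq_single i]
    · rw [pderiv_mul, pderiv_X_self, one_mul, pderiv_C, mul_zero, add_zero]
    · intro i' _ hne
      rw [pderiv_mul, pderiv_X_of_ne hne, zero_mul, pderiv_C, mul_zero, add_zero]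
    · intro hnotmem
      exact absurd (Finset.mem_univ i) hnotmem
  exact totalDegree_le_one_of_pderiv (p * q) hml
    (fun i i' => second_pderiv_zero (p * q) _ hb0 dp a hdcond hfinal i i')
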